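/- Let {(X_i, F_i)}_{i∈[n]} be finite measurable spaces, and let P and Q be the laws of a sequence (X_1,…,X_n) generated by probability kernels P^{(i)}(·|x_1,…,x_{i−1}) and Q^{(i)}(·|x_1,…,x_{i−1}) respectively. Then H²(P, Q) ≤ 100·log(n)·E_P[ Σ_{i=1}^n H²(P^{(i)}(·|X_1,…,X_{i−1}), Q^{(i)}(·|X_1,…,X_{i−1})) ] for n ≥ 2. -/

import Mathlib

open Finset Real

namespace HellSub

lemma sqrt_prod {ι : Type*} (s : Finset ι) (f : ι → ℝ) (h : ∀ i ∈ s, 0 ≤ f i) :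
    Real.sqrt (∏ i ∈ s, f i) = ∏ i ∈ s, Real.sqrt (f i) := by
  classical
  induction s using Finset.induction_on with
  | empty => simp
  | @insert a s' hx ih =>
    rw [Finset.prod_insert hx, Finset.prod_insert hx,
      Real.sqrt_mul (h a (Finset.mem_insert_self a s')),
      ih (fun i hi => h i (Finset.mem_insert_of_mem hi))]

lemma cs_sqrt {ι : Type*} (s : Finset ι) (a b : ι → ℝ)
    (ha : ∀ i ∈ s, 0 ≤ a i) (hb : ∀ i ∈ s, 0 ≤ b i) :
    ∑ i ∈ s, Real.sqrt (a i) * Real.sqrt (b i)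
      ≤ Real.sqrt (∑ i ∈ s, a i) * Real.sqrt (∑ i ∈ s, b i) := by
  have h1 : (∑ i ∈ s, Real.sqrt (a i) * Real.sqrt (b i)) ^ 2
      ≤ (∑ i ∈ s, a i) * (∑ i ∈ s, b i) := by
    have := Finset.sum_mul_sq_le_sq_mul_sq s (fun i => Real.sqrt (a i)) (fun i => Real.sqrt (b i))
    calc (∑ i ∈ s, Real.sqrt (a i) * Real.sqrt (b i)) ^ 2
        ≤ (∑ i ∈ s, Real.sqrt (a i) ^ 2) * ∑ i ∈ s, Real.sqrt (b i) ^ 2 := this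
      _ = (∑ i ∈ s, a i) * (∑ i ∈ s, b i) := by
          rw [Finset.sum_congr rfl (fun i hi => Real.sq_sqrt (ha i hi)),
            Finset.sum_congr rfl (fun i hi => Real.sq_sqrt (hb i hi))]
  have h0 : 0 ≤ ∑ i ∈ s, Real.sqrt (a i) * Real.sqrt (b i) :=
    Finset.sum_nonneg fun i _ => mul_nonneg (Real.sqrt_nonneg _) (Real.sqrt_nonneg _)
  calc ∑ i ∈ s, Real.sqrt (a i) * Real.sqrt (b i)
      = Real.sqrt ((∑ i ∈ s, Real.sqrt (a i) * Real.sqrt (b i)) ^ 2) := by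
        rw [Real.sqrt_sq h0]
    _ ≤ Real.sqrt ((∑ i ∈ s, a i) * (∑ i ∈ s, b i)) := Real.sqrt_le_sqrt h1
    _ = _ := Real.sqrt_mul (Finset.sum_nonneg ha) _

lemma hell_sub {ι : Type*} (s : Finset ι) (a b : ι → ℝ)
    (ha : ∀ i ∈ s, 0 ≤ a i) (hb : ∀ i ∈ s, 0 ≤ b i) :
    (Real.sqrt (∑ i ∈ s, a i) - Real.sqrt (∑ i ∈ s, b i)) ^ 2
      ≤ ∑ i ∈ s, (Real.sqrt (a i) - Real.sqrt (b i)) ^ 2 := by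
  have e1 : ∀ i ∈ s, (Real.sqrt (a i) - Real.sqrt (b i)) ^ 2
      = a i + b i - 2 * (Real.sqrt (a i) * Real.sqrt (b i)) := by
    intro i hi
    have := Real.sq_sqrt (ha i hi); have := Real.sq_sqrt (hb i hi)
    ring_nf
    nlinarith [Real.sq_sqrt (ha i hi), Real.sq_sqrt (hb i hi)]
  rw [Finset.sum_congr rfl e1]
  have e2 : (Real.sqrt (∑ i ∈ s, a i) - Real.sqrt (∑ i ∈ s, b i)) ^ 2
      = (∑ i ∈ s, a i) + (∑ i ∈ s, b i)
        - 2 * (Real.sqrt (∑ i ∈ s, a i) * Real.sqrt (∑ i ∈ s, b i)) := by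
    nlinarith [Real.sq_sqrt (Finset.sum_nonneg ha), Real.sq_sqrt (Finset.sum_nonneg hb)]
  rw [e2, Finset.sum_sub_distrib, Finset.sum_add_distrib, ← Finset.mul_sum]
  have := cs_sqrt s a b ha hb
  linarith

set_option linter.unusedSectionVars false

variable {n : ℕ} {X : Fin n → Type*} [∀ i, Fintype (X i)]

lemma coord (m : Fin n) (g : ((j : Fin n) → X j) → ℝ)
    (hg : ∀ x b, g (Function.update x m b) = g x)
    (w : ((j : Fin n) → X j) → X m → ℝ)
    (hw : ∀ x b, w (Function.update x m b) = w x) :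
    (Fintype.card (X m) : ℝ) * ∑ x : (j : Fin n) → X j, g x * w x (x m)
      = ∑ x : (j : Fin n) → X j, g x * ∑ b, w x b := by
  classical
  cases isEmpty_or_nonempty (X m) with
  | inl he =>
    have : (Fintype.card (X m) : ℝ) = 0 := by simp [Fintype.card_eq_zero]
    simp [this]
  | inr hne =>
    set e := Equiv.piSplitAt m X with he
    have hupd : ∀ (b b' : X m) (rest : (j : {j // j ≠ m}) → X j),
        e.symm (b, rest) = Function.update (e.symm (b', rest)) m b := by
      intro b b' rest
      funext j
      rcases eq_or_ne j m with h | h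
      · subst h; simp [he, Equiv.piSplitAt_symm_apply]
      · simp [he, Equiv.piSplitAt_symm_apply, h, Function.update_of_ne h]
    have hm : ∀ (b : X m) (rest), e.symm (b, rest) m = b := by
      intro b rest; simp [he, Equiv.piSplitAt_symm_apply]
    obtain ⟨b₀⟩ := hne
    have key : ∀ (F : ((j : Fin n) → X j) → ℝ),
        ∑ x : (j : Fin n) → X j, F x
          = ∑ rest : (j : {j // j ≠ m}) → X j, ∑ b : X m, F (e.symm (b, rest)) := by
      intro F
      rw [← Equiv.sum_comp e.symm F, Fintype.sum_prod_type, Finset.sum_comm]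
    have hgc : ∀ (b : X m) rest, g (e.symm (b, rest)) = g (e.symm (b₀, rest)) := by
      intro b rest; rw [hupd b b₀ rest, hg]
    have hwc : ∀ (b : X m) rest, w (e.symm (b, rest)) = w (e.symm (b₀, rest)) := by
      intro b rest; rw [hupd b b₀ rest, hw]
    rw [key fun x => g x * w x (x m), key fun x => g x * ∑ b, w x b,
      Finset.mul_sum]
    refine Finset.sum_congr rfl fun rest _ => ?_
    have : ∀ b : X m, g (e.symm (b, rest)) * w (e.symm (b, rest)) (e.symm (b, rest) m)
        = g (e.symm (b₀, rest)) * w (e.symm (b₀, rest)) b := by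
      intro b; rw [hgc, hwc, hm]
    rw [Finset.sum_congr rfl fun b _ => this b, ← Finset.mul_sum]
    have : ∀ b : X m, g (e.symm (b, rest)) * ∑ c, w (e.symm (b, rest)) c
        = g (e.symm (b₀, rest)) * ∑ c, w (e.symm (b₀, rest)) c := by
      intro b; rw [hgc, hwc]
    rw [Finset.sum_congr rfl fun b _ => this b, Finset.sum_const, Finset.card_univ]
    rw [nsmul_eq_mul]


def Ppre (K : (i : Fin n) → ((j : Fin n) → X j) → X i → ℝ) (k : ℕ)
    (x : (j : Fin n) → X j) : ℝ :=
  ∏ i ∈ Finset.univ.filter (fun i : Fin n => (i : ℕ) < k), K i x (x i)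

def Psuf (K : (i : Fin n) → ((j : Fin n) → X j) → X i → ℝ) (k : ℕ)
    (x : (j : Fin n) → X j) : ℝ :=
  ∏ i ∈ Finset.univ.filter (fun i : Fin n => k ≤ (i : ℕ)), K i x (x i)

def CC (X : Fin n → Type*) [∀ i, Fintype (X i)] (k : ℕ) : ℝ :=
  ∏ i ∈ Finset.univ.filter (fun i : Fin n => k ≤ (i : ℕ)), (Fintype.card (X i) : ℝ)

def Dep (k : ℕ) (g : ((j : Fin n) → X j) → ℝ) : Prop :=
  ∀ x y, (∀ j : Fin n, (j : ℕ) < k → x j = y j) → g x = g y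

lemma filter_suf_split {k : ℕ} (hk : k < n) :
    Finset.univ.filter (fun i : Fin n => k ≤ (i : ℕ))
      = insert ⟨k, hk⟩ (Finset.univ.filter (fun i : Fin n => k + 1 ≤ (i : ℕ))) := by
  ext i
  simp only [Finset.mem_filter, Finset.mem_insert, Finset.mem_univ, true_and, Fin.ext_iff]
  omega

lemma not_mem_suf {k : ℕ} (hk : k < n) :
    (⟨k, hk⟩ : Fin n) ∉ Finset.univ.filter (fun i : Fin n => k + 1 ≤ (i : ℕ)) := by
  simp

lemma Psuf_split (K : (i : Fin n) → ((j : Fin n) → X j) → X i → ℝ) {k : ℕ} (hk : k < n)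
    (x : (j : Fin n) → X j) :
    Psuf K k x = K ⟨k, hk⟩ x (x ⟨k, hk⟩) * Psuf K (k + 1) x := by
  rw [Psuf, filter_suf_split hk, Finset.prod_insert (not_mem_suf hk)]; rfl

lemma CC_split {k : ℕ} (hk : k < n) :
    CC X k = (Fintype.card (X ⟨k, hk⟩) : ℝ) * CC X (k + 1) := by
  rw [CC, filter_suf_split hk, Finset.prod_insert (not_mem_suf hk)]; rfl

lemma filter_suf_top {k : ℕ} (hk : n ≤ k) :
    Finset.univ.filter (fun i : Fin n => k ≤ (i : ℕ)) = (∅ : Finset (Fin n)) := by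
  ext i
  simp only [Finset.mem_filter, Finset.mem_univ, true_and, Finset.notMem_empty, iff_false]
  have := i.isLt; omega

lemma Psuf_top (K : (i : Fin n) → ((j : Fin n) → X j) → X i → ℝ) {k : ℕ} (hk : n ≤ k)
    (x : (j : Fin n) → X j) : Psuf K k x = 1 := by
  rw [Psuf, filter_suf_top hk, Finset.prod_empty]

lemma CC_top {k : ℕ} (hk : n ≤ k) : CC X k = 1 := by
  rw [CC, filter_suf_top hk, Finset.prod_empty]

lemma Psuf_zero (K : (i : Fin n) → ((j : Fin n) → X j) → X i → ℝ)
    (x : (j : Fin n) → X j) : Psuf K 0 x = ∏ i, K i x (x i) := by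
  rw [Psuf]
  congr 1
  ext i
  simp

lemma masterU (K : (i : Fin n) → ((j : Fin n) → X j) → X i → ℝ)
    (hK1 : ∀ i x, ∑ a, K i x a = 1)
    (hKdep : ∀ i (x y : (j : Fin n) → X j), (∀ j, j < i → x j = y j) → K i x = K i y) :
    ∀ (m k : ℕ), n ≤ k + m → ∀ g : ((j : Fin n) → X j) → ℝ, Dep k g →
      (∑ x : (j : Fin n) → X j, g x * Psuf K k x) * CC X k = ∑ x : (j : Fin n) → X j, g x := by
  intro m
  induction m with
  | zero =>
    intro k hk g _
    simp only [Nat.add_zero] at hk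
    simp [Psuf_top K hk, CC_top hk]
  | succ m ih =>
    intro k hk g hg
    rcases le_or_gt n k with hk' | hk'
    · simp [Psuf_top K hk', CC_top hk']
    · set k' : Fin n := ⟨k, hk'⟩ with hk'def
      have hvk : (k' : ℕ) = k := rfl
      have hupdg : ∀ x b, g (Function.update x k' b) = g x := by
        intro x b
        refine hg _ _ fun j hj => ?_
        refine Function.update_of_ne ?_ _ _
        intro hje
        rw [hje, hvk] at hj
        exact lt_irrefl _ hj
      have hupdK : ∀ x b, K k' (Function.update x k' b) = K k' x := by
        intro x b
        refine hKdep _ _ _ fun j hj => ?_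
        refine Function.update_of_ne ?_ _ _
        intro hje
        rw [hje] at hj
        exact lt_irrefl _ hj
      have hdep' : Dep (k + 1) (fun x => g x * K k' x (x k')) := by
        intro x y hxy
        have h1 : g x = g y := hg _ _ fun j hj => hxy j (by omega)
        have h2 : K k' x = K k' y := hKdep _ _ _ fun j hj => by
          have hj2 : (j : ℕ) < k := by
            have := Fin.lt_def.mp hj
            omega
          exact hxy j (by omega)
        have h3 : x k' = y k' := hxy k' (by rw [hvk]; omega)
        show g x * K k' x (x k') = g y * K k' y (y k')
        rw [h1, h2, h3]
      have e1 : ∀ x, g x * Psuf K k x = (g x * K k' x (x k')) * Psuf K (k + 1) x := by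
        intro x
        rw [Psuf_split K hk' x]
        ring
      calc (∑ x : (j : Fin n) → X j, g x * Psuf K k x) * CC X k
          = ((∑ x : (j : Fin n) → X j, (g x * K k' x (x k')) * Psuf K (k + 1) x)
              * CC X (k + 1)) * (Fintype.card (X k') : ℝ) := by
            rw [Finset.sum_congr rfl fun x _ => e1 x, CC_split hk']
            ring
        _ = (∑ x : (j : Fin n) → X j, g x * K k' x (x k')) * (Fintype.card (X k') : ℝ) := by
            rw [ih (k + 1) (by omega) _ hdep']
        _ = ∑ x : (j : Fin n) → X j, g x * ∑ b, K k' x b := by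
          rw [mul_comm]
          exact coord k' g hupdg (fun x b => K k' x b) (fun x b => hupdK x b)
        _ = ∑ x : (j : Fin n) → X j, g x := by
          simp [hK1]




variable (Pk Qk : (i : Fin n) → ((j : Fin n) → X j) → X i → ℝ)

noncomputable def AKk (i : Fin n) (x : (j : Fin n) → X j) (a : X i) : ℝ :=
  Real.sqrt (Pk i x a * Qk i x a)

noncomputable def MidA (m k : ℕ) (x : (j : Fin n) → X j) : ℝ :=
  ∏ i ∈ Finset.univ.filter (fun i : Fin n => m ≤ (i : ℕ) ∧ (i : ℕ) < k),
    AKk Pk Qk i x (x i)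

noncomputable def dd (k : ℕ) (x : (j : Fin n) → X j) : ℝ :=
  if h : k < n then
    ∑ b, (Real.sqrt (Pk ⟨k, h⟩ x b) - Real.sqrt (Qk ⟨k, h⟩ x b)) ^ 2
  else 0

lemma dd_nonneg (k : ℕ) (x : (j : Fin n) → X j) : 0 ≤ dd Pk Qk k x := by
  rw [dd]
  split
  · exact Finset.sum_nonneg fun b _ => sq_nonneg _
  · exact le_refl 0

lemma MidA_nonneg (m k : ℕ) (x : (j : Fin n) → X j) : 0 ≤ MidA Pk Qk m k x :=
  Finset.prod_nonneg fun i _ => Real.sqrt_nonneg _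

lemma Psuf_nonneg (K : (i : Fin n) → ((j : Fin n) → X j) → X i → ℝ)
    (hK0 : ∀ i x a, 0 ≤ K i x a) (k : ℕ) (x : (j : Fin n) → X j) : 0 ≤ Psuf K k x :=
  Finset.prod_nonneg fun i _ => hK0 i x (x i)

lemma Ppre_nonneg (K : (i : Fin n) → ((j : Fin n) → X j) → X i → ℝ)
    (hK0 : ∀ i x a, 0 ≤ K i x a) (k : ℕ) (x : (j : Fin n) → X j) : 0 ≤ Ppre K k x :=
  Finset.prod_nonneg fun i _ => hK0 i x (x i)

lemma MidA_same (m : ℕ) (x : (j : Fin n) → X j) : MidA Pk Qk m m x = 1 := by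
  rw [MidA]
  rw [show Finset.univ.filter (fun i : Fin n => m ≤ (i : ℕ) ∧ (i : ℕ) < m) = ∅ by
    ext i
    simp only [Finset.mem_filter, Finset.mem_univ, true_and, Finset.notMem_empty, iff_false]
    omega]
  exact Finset.prod_empty

lemma MidA_succ {m k : ℕ} (hmk : m ≤ k) (hk : k < n) (x : (j : Fin n) → X j) :
    MidA Pk Qk m (k + 1) x = MidA Pk Qk m k x * AKk Pk Qk ⟨k, hk⟩ x (x ⟨k, hk⟩) := by
  rw [MidA, MidA]
  rw [show Finset.univ.filter (fun i : Fin n => m ≤ (i : ℕ) ∧ (i : ℕ) < k + 1)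
      = insert ⟨k, hk⟩ (Finset.univ.filter (fun i : Fin n => m ≤ (i : ℕ) ∧ (i : ℕ) < k)) by
    ext i
    simp only [Finset.mem_filter, Finset.mem_univ, true_and, Finset.mem_insert, Fin.ext_iff]
    omega]
  rw [Finset.prod_insert (by
    simp only [Finset.mem_filter, Finset.mem_univ, true_and, not_and, not_lt]
    omega)]
  ring

lemma MidA_split {m k : ℕ} (hmk : m ≤ k) (x : (j : Fin n) → X j) :
    MidA Pk Qk 0 k x = MidA Pk Qk 0 m x * MidA Pk Qk m k x := by
  rw [MidA, MidA, MidA]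
  rw [show Finset.univ.filter (fun i : Fin n => 0 ≤ (i : ℕ) ∧ (i : ℕ) < k)
      = (Finset.univ.filter (fun i : Fin n => 0 ≤ (i : ℕ) ∧ (i : ℕ) < m))
        ∪ (Finset.univ.filter (fun i : Fin n => m ≤ (i : ℕ) ∧ (i : ℕ) < k)) by
    ext i
    simp only [Finset.mem_filter, Finset.mem_univ, true_and, Finset.mem_union]
    omega]
  refine Finset.prod_union ?_
  rw [Finset.disjoint_left]
  intro i hi hi2
  simp only [Finset.mem_filter, Finset.mem_univ, true_and] at hi hi2
  omega

lemma MidA_zero_sqrt (hPk0 : ∀ i x a, 0 ≤ Pk i x a) (hQk0 : ∀ i x a, 0 ≤ Qk i x a)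
    (k : ℕ) (x : (j : Fin n) → X j) :
    MidA Pk Qk 0 k x = Real.sqrt (Ppre Pk k x * Ppre Qk k x) := by
  rw [MidA]
  rw [show Finset.univ.filter (fun i : Fin n => 0 ≤ (i : ℕ) ∧ (i : ℕ) < k)
      = Finset.univ.filter (fun i : Fin n => (i : ℕ) < k) by
    ext i
    simp only [Finset.mem_filter, Finset.mem_univ, true_and]
    omega]
  rw [Ppre, Ppre, ← Finset.prod_mul_distrib,
    sqrt_prod _ _ (fun i _ => mul_nonneg (hPk0 i x (x i)) (hQk0 i x (x i)))]
  exact Finset.prod_congr rfl fun i _ => rfl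

lemma Ppre_mul_Psuf (K : (i : Fin n) → ((j : Fin n) → X j) → X i → ℝ) (k : ℕ)
    (x : (j : Fin n) → X j) :
    Ppre K k x * Psuf K k x = ∏ i, K i x (x i) := by
  rw [Ppre, Psuf]
  rw [show Finset.univ.filter (fun i : Fin n => k ≤ (i : ℕ))
      = Finset.univ.filter (fun i : Fin n => ¬ ((i : ℕ) < k)) by
    ext i
    simp only [Finset.mem_filter, Finset.mem_univ, true_and, not_lt]]
  exact Finset.prod_filter_mul_prod_filter_not _ _ _



lemma Dep_mono {m k : ℕ} (hmk : m ≤ k) {g : ((j : Fin n) → X j) → ℝ}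
    (hg : Dep m g) : Dep k g :=
  fun x y hxy => hg x y fun j hj => hxy j (by omega)

lemma Ppre_dep (K : (i : Fin n) → ((j : Fin n) → X j) → X i → ℝ)
    (hKdep : ∀ i (x y : (j : Fin n) → X j), (∀ j, j < i → x j = y j) → K i x = K i y)
    (k : ℕ) : Dep k (fun x => Ppre K k x) := by
  intro x y hxy
  refine Finset.prod_congr rfl fun i hi => ?_
  simp only [Finset.mem_filter, Finset.mem_univ, true_and] at hi
  rw [hKdep i x y fun j hj => hxy j (lt_trans (Fin.lt_def.mp hj) hi), hxy i hi]

lemma MidA_dep (hPdep : ∀ i (x y : (j : Fin n) → X j), (∀ j, j < i → x j = y j) → Pk i x = Pk i y)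
    (hQdep : ∀ i (x y : (j : Fin n) → X j), (∀ j, j < i → x j = y j) → Qk i x = Qk i y)
    (m k : ℕ) : Dep k (fun x => MidA Pk Qk m k x) := by
  intro x y hxy
  refine Finset.prod_congr rfl fun i hi => ?_
  simp only [Finset.mem_filter, Finset.mem_univ, true_and] at hi
  rw [AKk, AKk,
    hPdep i x y fun j hj => hxy j (lt_trans (Fin.lt_def.mp hj) hi.2),
    hQdep i x y fun j hj => hxy j (lt_trans (Fin.lt_def.mp hj) hi.2),
    hxy i hi.2]

lemma dd_dep (hPdep : ∀ i (x y : (j : Fin n) → X j), (∀ j, j < i → x j = y j) → Pk i x = Pk i y)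
    (hQdep : ∀ i (x y : (j : Fin n) → X j), (∀ j, j < i → x j = y j) → Qk i x = Qk i y)
    (k : ℕ) : Dep k (fun x => dd Pk Qk k x) := by
  intro x y hxy
  simp only [dd]
  split
  · next h =>
    refine Finset.sum_congr rfl fun b _ => ?_
    rw [hPdep ⟨k, h⟩ x y fun j hj => hxy j (Fin.lt_def.mp hj),
      hQdep ⟨k, h⟩ x y fun j hj => hxy j (Fin.lt_def.mp hj)]
  · rfl

lemma CC_pos (hne : Nonempty ((j : Fin n) → X j)) (k : ℕ) : 0 < CC X k := by
  obtain ⟨x0⟩ := hne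
  refine Finset.prod_pos fun i _ => ?_
  have : Nonempty (X i) := ⟨x0 i⟩
  exact_mod_cast Fintype.card_pos

lemma sum_wd (hPk0 : ∀ i x a, 0 ≤ Pk i x a) (hQk0 : ∀ i x a, 0 ≤ Qk i x a)
    (hPk1 : ∀ i x, ∑ a, Pk i x a = 1) (hQk1 : ∀ i x, ∑ a, Qk i x a = 1)
    {k : ℕ} (hk : k < n) (x : (j : Fin n) → X j) :
    ∑ b, (Pk ⟨k, hk⟩ x b - AKk Pk Qk ⟨k, hk⟩ x b) = dd Pk Qk k x / 2 := by
  have hb : ∀ b, (Real.sqrt (Pk ⟨k, hk⟩ x b) - Real.sqrt (Qk ⟨k, hk⟩ x b)) ^ 2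
      = Pk ⟨k, hk⟩ x b + Qk ⟨k, hk⟩ x b - 2 * AKk Pk Qk ⟨k, hk⟩ x b := by
    intro b
    rw [sub_sq, Real.sq_sqrt (hPk0 _ _ _), Real.sq_sqrt (hQk0 _ _ _), AKk,
      Real.sqrt_mul (hPk0 _ _ _)]
    ring
  rw [dd, dif_pos hk, Finset.sum_congr rfl fun b _ => hb b]
  rw [Finset.sum_sub_distrib, Finset.sum_sub_distrib, Finset.sum_add_distrib,
    hPk1, hQk1, ← Finset.mul_sum]
  ring

lemma TL (hPk0 : ∀ i x a, 0 ≤ Pk i x a) (hQk0 : ∀ i x a, 0 ≤ Qk i x a)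
    (hPk1 : ∀ i x, ∑ a, Pk i x a = 1) (hQk1 : ∀ i x, ∑ a, Qk i x a = 1)
    (hPdep : ∀ i (x y : (j : Fin n) → X j), (∀ j, j < i → x j = y j) → Pk i x = Pk i y)
    (hQdep : ∀ i (x y : (j : Fin n) → X j), (∀ j, j < i → x j = y j) → Qk i x = Qk i y)
    (hne : Nonempty ((j : Fin n) → X j))
    {m k : ℕ} (hmk : m ≤ k) (hk : k < n) (g : ((j : Fin n) → X j) → ℝ) (hgdep : Dep m g) :
    2 * ((∑ x : (j : Fin n) → X j, g x * MidA Pk Qk m k x * Psuf Pk k x)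
        - ∑ x : (j : Fin n) → X j, g x * MidA Pk Qk m (k + 1) x * Psuf Pk (k + 1) x)
      = ∑ x : (j : Fin n) → X j, (g x * MidA Pk Qk m k x * dd Pk Qk k x) * Psuf Pk k x := by
  classical
  set k' : Fin n := ⟨k, hk⟩ with hk'def
  set gg : ((j : Fin n) → X j) → ℝ := fun x => g x * MidA Pk Qk m k x with hggdef
  have hggdep : Dep k gg := by
    intro x y hxy
    have h1 := Dep_mono hmk hgdep x y hxy
    have h2 : MidA Pk Qk m k x = MidA Pk Qk m k y := MidA_dep Pk Qk hPdep hQdep m k x y hxy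
    simp only [hggdef]
    rw [h1, h2]
  set wd : ((j : Fin n) → X j) → X k' → ℝ :=
    fun x b => Pk k' x b - AKk Pk Qk k' x b with hwddef
  have hwd_hist : ∀ (x y : (j : Fin n) → X j), (∀ j : Fin n, (j : ℕ) < k → x j = y j) →
      wd x = wd y := by
    intro x y hxy
    funext b
    simp only [hwddef, AKk]
    rw [hPdep k' x y fun j hj => hxy j (Fin.lt_def.mp hj),
      hQdep k' x y fun j hj => hxy j (Fin.lt_def.mp hj)]
  have hdep1 : Dep (k + 1) (fun x => gg x * wd x (x k')) := by
    intro x y hxy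
    have h1 : gg x = gg y := hggdep x y fun j hj => hxy j (by omega)
    have h2 : wd x = wd y := hwd_hist x y fun j hj => hxy j (by omega)
    have h3 : x k' = y k' := hxy k' (by simp [hk'def])
    simp only [h1, h2, h3]
  have step1 : ∀ x : (j : Fin n) → X j,
      g x * MidA Pk Qk m k x * Psuf Pk k x - g x * MidA Pk Qk m (k + 1) x * Psuf Pk (k + 1) x
        = (gg x * wd x (x k')) * Psuf Pk (k + 1) x := by
    intro x
    rw [Psuf_split Pk hk x, MidA_succ Pk Qk hmk hk x]
    simp only [hggdef, hwddef]
    ring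
  have h1 : (∑ x : (j : Fin n) → X j, (gg x * wd x (x k')) * Psuf Pk (k + 1) x) * CC X (k + 1)
      = ∑ x : (j : Fin n) → X j, gg x * wd x (x k') :=
    masterU Pk hPk1 hPdep n (k + 1) (by omega) _ hdep1
  have hupd_gg : ∀ x b, gg (Function.update x k' b) = gg x := by
    intro x b
    refine hggdep _ _ fun j hj => ?_
    refine Function.update_of_ne ?_ _ _
    intro hje
    rw [hje] at hj
    simp [hk'def] at hj
  have hupd_wd : ∀ x b, wd (Function.update x k' b) = wd x := by
    intro x b
    refine hwd_hist _ _ fun j hj => ?_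
    refine Function.update_of_ne ?_ _ _
    intro hje
    rw [hje] at hj
    simp [hk'def] at hj
  have h2 : (Fintype.card (X k') : ℝ) * ∑ x : (j : Fin n) → X j, gg x * wd x (x k')
      = (∑ x : (j : Fin n) → X j, gg x * dd Pk Qk k x) / 2 := by
    rw [coord k' gg hupd_gg wd hupd_wd]
    have e : ∀ x, gg x * (∑ b, wd x b) = (gg x * dd Pk Qk k x) / 2 := by
      intro x
      rw [show (∑ b, wd x b) = dd Pk Qk k x / 2 from
        sum_wd Pk Qk hPk0 hQk0 hPk1 hQk1 hk x]
      ring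
    rw [Finset.sum_congr rfl fun x _ => e x, ← Finset.sum_div]
  have hdep2 : Dep k (fun x => gg x * dd Pk Qk k x) := by
    intro x y hxy
    have h1' : gg x = gg y := hggdep x y hxy
    have h2' : dd Pk Qk k x = dd Pk Qk k y := dd_dep Pk Qk hPdep hQdep k x y hxy
    simp only []
    rw [h1', h2']
  have h3 : (∑ x : (j : Fin n) → X j, (gg x * dd Pk Qk k x) * Psuf Pk k x) * CC X k
      = ∑ x : (j : Fin n) → X j, gg x * dd Pk Qk k x :=
    masterU Pk hPk1 hPdep n k (by omega) _ hdep2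
  have hcc : CC X k = (Fintype.card (X k') : ℝ) * CC X (k + 1) := CC_split hk
  have hccpos : 0 < CC X (k + 1) := CC_pos hne _
  have hcard : (0 : ℝ) < (Fintype.card (X k') : ℝ) := by
    obtain ⟨x0⟩ := hne
    have : Nonempty (X k') := ⟨x0 k'⟩
    exact_mod_cast Fintype.card_pos
  rw [← Finset.sum_sub_distrib]
  rw [Finset.sum_congr rfl fun x _ => step1 x]
  -- now: 2 * Σ (gg*wd)*Psuf(k+1) = Σ (g*MidA*dd)*Psuf k
  have hgoalshape : ∑ x : (j : Fin n) → X j, (g x * MidA Pk Qk m k x * dd Pk Qk k x) * Psuf Pk k x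
      = ∑ x : (j : Fin n) → X j, (gg x * dd Pk Qk k x) * Psuf Pk k x := by
    refine Finset.sum_congr rfl fun x _ => by simp only [hggdef]
  rw [hgoalshape]
  have key : (2 * ∑ x : (j : Fin n) → X j, (gg x * wd x (x k')) * Psuf Pk (k + 1) x)
        * ((Fintype.card (X k') : ℝ) * CC X (k + 1))
      = (∑ x : (j : Fin n) → X j, (gg x * dd Pk Qk k x) * Psuf Pk k x)
        * ((Fintype.card (X k') : ℝ) * CC X (k + 1)) := by
    calc (2 * ∑ x : (j : Fin n) → X j, (gg x * wd x (x k')) * Psuf Pk (k + 1) x)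
          * ((Fintype.card (X k') : ℝ) * CC X (k + 1))
        = 2 * ((Fintype.card (X k') : ℝ)
            * ((∑ x : (j : Fin n) → X j, (gg x * wd x (x k')) * Psuf Pk (k + 1) x)
                * CC X (k + 1))) := by ring
      _ = 2 * ((Fintype.card (X k') : ℝ) * ∑ x : (j : Fin n) → X j, gg x * wd x (x k')) := by
          rw [h1]
      _ = ∑ x : (j : Fin n) → X j, gg x * dd Pk Qk k x := by rw [h2]; ring
      _ = (∑ x : (j : Fin n) → X j, (gg x * dd Pk Qk k x) * Psuf Pk k x) * CC X k := h3.symm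
      _ = _ := by rw [hcc]
  have hnz : ((Fintype.card (X k') : ℝ) * CC X (k + 1)) ≠ 0 :=
    ne_of_gt (mul_pos hcard hccpos)
  exact mul_right_cancel₀ hnz key


lemma tele (f : ℕ → ℝ) {a b : ℕ} (h : a ≤ b) :
    ∑ k ∈ Finset.Ico a b, (f k - f (k + 1)) = f a - f b := by
  induction b, h using Nat.le_induction with
  | base => simp
  | succ b hb ih =>
    rw [Finset.sum_Ico_succ_top hb, ih]
    ring

lemma swap_tri (N : ℕ) (f : ℕ → ℕ → ℝ) :
    ∑ k ∈ Finset.range N, ∑ m ∈ Finset.range (k + 1), f m k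
      = ∑ m ∈ Finset.range N, ∑ k ∈ Finset.Ico m N, f m k := by
  induction N with
  | zero => simp
  | succ N ih =>
    have h1 : ∀ m ∈ Finset.range N, ∑ k ∈ Finset.Ico m (N + 1), f m k
        = (∑ k ∈ Finset.Ico m N, f m k) + f m N := by
      intro m hm
      exact Finset.sum_Ico_succ_top (le_of_lt (Finset.mem_range.mp hm)) _
    have hR : ∑ m ∈ Finset.range (N + 1), ∑ k ∈ Finset.Ico m (N + 1), f m k
        = (∑ m ∈ Finset.range N, ∑ k ∈ Finset.Ico m N, f m k)
          + ∑ m ∈ Finset.range (N + 1), f m N := by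
      rw [Finset.sum_range_succ, Finset.sum_congr rfl h1, Finset.sum_add_distrib,
        Finset.sum_Ico_succ_top (le_refl N), Finset.Ico_self, Finset.sum_empty,
        Finset.sum_range_succ (fun m => f m N)]
      ring
    rw [Finset.sum_range_succ, ih, hR]

noncomputable def ind (P : Prop) (r : ℝ) : ℝ :=
  @ite _ P (Classical.propDecidable P) r 0

lemma ind_pos {P : Prop} (h : P) (r : ℝ) : ind P r = r := if_pos h

lemma ind_neg {P : Prop} (h : ¬ P) (r : ℝ) : ind P r = 0 := if_neg h

lemma ind_nonneg {P : Prop} {r : ℝ} (hr : 0 ≤ r) : 0 ≤ ind P r := by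
  rw [ind]; split
  · exact hr
  · exact le_refl 0

lemma ind_mul (P : Prop) (r s : ℝ) : ind P r * s = ind P (r * s) := by
  rw [ind, ind]; split
  · rfl
  · rw [zero_mul]

lemma ind_congr {P Q : Prop} {r s : ℝ} (h : P ↔ Q) (hrs : r = s) :
    ind P r = ind Q s := by
  rw [ind, ind]
  by_cases hp : P
  · rw [if_pos hp, if_pos (h.mp hp), hrs]
  · rw [if_neg hp, if_neg (fun hq => hp (h.mpr hq))]

lemma ind_le {P : Prop} {r s : ℝ} (hs : 0 ≤ s) (hr : P → r ≤ s) : ind P r ≤ s := by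
  rw [ind]; split
  · next h => exact hr h
  · exact hs

section Stop
variable (Pk Qk : (i : Fin n) → ((j : Fin n) → X j) → X i → ℝ)

def Bad (m : ℕ) (x : (j : Fin n) → X j) : Prop :=
  256 * Ppre Pk m x ≤ Ppre Qk m x

def firstB (m : ℕ) (x : (j : Fin n) → X j) : Prop :=
  Bad Pk Qk m x ∧ ∀ j, j < m → ¬ Bad Pk Qk j x

def stopped (k : ℕ) (x : (j : Fin n) → X j) : Prop :=
  ∃ m, m ≤ k ∧ Bad Pk Qk m x

lemma partition_first (k : ℕ) (x : (j : Fin n) → X j) (c : ℝ) :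
    ∑ m ∈ Finset.range (k + 1), ind (firstB Pk Qk m x) c
      = ind (stopped Pk Qk k x) c := by
  classical
  by_cases hs : stopped Pk Qk k x
  · obtain ⟨m, hmk, hmB⟩ := hs
    have hex : ∃ j, Bad Pk Qk j x := ⟨m, hmB⟩
    set m₀ := Nat.find hex with hm₀
    have hfb : firstB Pk Qk m₀ x := ⟨Nat.find_spec hex, fun j hj => Nat.find_min hex hj⟩
    have hm₀k : m₀ ≤ k := le_trans (Nat.find_min' hex hmB) hmk
    rw [ind_pos ⟨m, hmk, hmB⟩]
    rw [Finset.sum_eq_single_of_mem m₀ (Finset.mem_range.mpr (by omega))]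
    · exact ind_pos hfb c
    · intro b _ hbne
      refine ind_neg (fun hfb2 => ?_) c
      have h1 : m₀ ≤ b := Nat.find_min' hex hfb2.1
      have h2 : m₀ < b := lt_of_le_of_ne h1 (fun h => hbne h.symm)
      exact hfb2.2 m₀ h2 (Nat.find_spec hex)
  · rw [ind_neg hs]
    refine Finset.sum_eq_zero fun m hm => ?_
    refine ind_neg (fun hfb => hs ⟨m, ?_, hfb.1⟩) c
    have := Finset.mem_range.mp hm
    omega

lemma Bad_iff (hPdep : ∀ i (x y : (j : Fin n) → X j), (∀ j, j < i → x j = y j) → Pk i x = Pk i y)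
    (hQdep : ∀ i (x y : (j : Fin n) → X j), (∀ j, j < i → x j = y j) → Qk i x = Qk i y)
    (m : ℕ) (x y : (j : Fin n) → X j) (hxy : ∀ j : Fin n, (j : ℕ) < m → x j = y j) :
    Bad Pk Qk m x ↔ Bad Pk Qk m y := by
  have hp : Ppre Pk m x = Ppre Pk m y := Ppre_dep Pk hPdep m x y hxy
  have hq : Ppre Qk m x = Ppre Qk m y := Ppre_dep Qk hQdep m x y hxy
  rw [Bad, Bad, hp, hq]

lemma firstB_iff
    (hPdep : ∀ i (x y : (j : Fin n) → X j), (∀ j, j < i → x j = y j) → Pk i x = Pk i y)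
    (hQdep : ∀ i (x y : (j : Fin n) → X j), (∀ j, j < i → x j = y j) → Qk i x = Qk i y)
    (m : ℕ) (x y : (j : Fin n) → X j) (hxy : ∀ j : Fin n, (j : ℕ) < m → x j = y j) :
    firstB Pk Qk m x ↔ firstB Pk Qk m y := by
  rw [firstB, firstB, Bad_iff Pk Qk hPdep hQdep m x y hxy]
  constructor
  · rintro ⟨h1, h2⟩
    refine ⟨h1, fun j hj hb => h2 j hj ?_⟩
    rw [Bad_iff Pk Qk hPdep hQdep j x y fun i hi => hxy i (by omega)]
    exact hb
  · rintro ⟨h1, h2⟩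
    refine ⟨h1, fun j hj hb => h2 j hj ?_⟩
    rw [← Bad_iff Pk Qk hPdep hQdep j x y fun i hi => hxy i (by omega)]
    exact hb

end Stop

end HellSub

open HellSub

theorem hellinger_subadditivity_sequential
    (n : ℕ) (hn : 2 ≤ n) (X : Fin n → Type*) [∀ i, Fintype (X i)]
    (Pk Qk : (i : Fin n) → ((j : Fin n) → X j) → X i → ℝ)
    -- each kernel is a pmf given any history
    (hPk0 : ∀ i x a, 0 ≤ Pk i x a) (hQk0 : ∀ i x a, 0 ≤ Qk i x a)
    (hPk1 : ∀ i x, ∑ a, Pk i x a = 1) (hQk1 : ∀ i x, ∑ a, Qk i x a = 1)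
    -- each kernel depends only on the strict past (X_1, …, X_{i-1})
    (hPdep : ∀ i (x y : (j : Fin n) → X j), (∀ j, j < i → x j = y j) → Pk i x = Pk i y)
    (hQdep : ∀ i (x y : (j : Fin n) → X j), (∀ j, j < i → x j = y j) → Qk i x = Qk i y) :
    ∑ x : (j : Fin n) → X j,
        (Real.sqrt (∏ i, Pk i x (x i)) - Real.sqrt (∏ i, Qk i x (x i))) ^ 2
      ≤ 100 * Real.log n *
          ∑ x : (j : Fin n) → X j, (∏ i, Pk i x (x i)) *
            ∑ i, ∑ a, (Real.sqrt (Pk i x a) - Real.sqrt (Qk i x a)) ^ 2 := by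
  classical
  by_cases hne : Nonempty ((j : Fin n) → X j)
  case neg =>
    have : IsEmpty ((j : Fin n) → X j) := not_nonempty_iff.mp hne
    rw [Finset.univ_eq_empty, Finset.sum_empty, Finset.sum_empty]
    simp
  case pos =>
  have hp0 : ∀ x : (j : Fin n) → X j, 0 ≤ ∏ i, Pk i x (x i) :=
    fun x => Finset.prod_nonneg fun i _ => hPk0 i x (x i)
  have hq0 : ∀ x : (j : Fin n) → X j, 0 ≤ ∏ i, Qk i x (x i) :=
    fun x => Finset.prod_nonneg fun i _ => hQk0 i x (x i)
  -- normalization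
  have hcardpos : 0 < (Fintype.card ((j : Fin n) → X j) : ℝ) := by
    have := hne
    exact_mod_cast Fintype.card_pos
  have hCC0 : CC X 0 = (Fintype.card ((j : Fin n) → X j) : ℝ) := by
    rw [CC, Fintype.card_pi]
    rw [show Finset.univ.filter (fun i : Fin n => 0 ≤ (i : ℕ)) = Finset.univ by
      ext i; simp]
    rw [Nat.cast_prod]
  have hsum1 : ∑ _x : (j : Fin n) → X j, (1 : ℝ)
      = (Fintype.card ((j : Fin n) → X j) : ℝ) := by simp
  have hPsuf1 : ∑ x : (j : Fin n) → X j, Psuf Pk 0 x = 1 := by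
    have h := masterU Pk hPk1 hPdep n 0 (by omega) (fun _ => (1 : ℝ)) (fun x y _ => rfl)
    simp only [one_mul] at h
    rw [hCC0, hsum1] at h
    refine mul_right_cancel₀ (ne_of_gt hcardpos) ?_
    rw [one_mul]
    exact h
  have hQsuf1 : ∑ x : (j : Fin n) → X j, Psuf Qk 0 x = 1 := by
    have h := masterU Qk hQk1 hQdep n 0 (by omega) (fun _ => (1 : ℝ)) (fun x y _ => rfl)
    simp only [one_mul] at h
    rw [hCC0, hsum1] at h
    refine mul_right_cancel₀ (ne_of_gt hcardpos) ?_
    rw [one_mul]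
    exact h
  have hSp : ∑ x : (j : Fin n) → X j, ∏ i, Pk i x (x i) = 1 := by
    rw [← hPsuf1]
    exact Finset.sum_congr rfl fun x _ => (Psuf_zero Pk x).symm
  have hSq : ∑ x : (j : Fin n) → X j, ∏ i, Qk i x (x i) = 1 := by
    rw [← hQsuf1]
    exact Finset.sum_congr rfl fun x _ => (Psuf_zero Qk x).symm
  -- Hellinger affinity
  have hS2 : ∑ x : (j : Fin n) → X j,
        (Real.sqrt (∏ i, Pk i x (x i)) - Real.sqrt (∏ i, Qk i x (x i))) ^ 2
      = 2 - 2 * ∑ x : (j : Fin n) → X j, MidA Pk Qk 0 n x := by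
    have hMid : ∀ x : (j : Fin n) → X j, MidA Pk Qk 0 n x
        = Real.sqrt (∏ i, Pk i x (x i)) * Real.sqrt (∏ i, Qk i x (x i)) := by
      intro x
      rw [MidA_zero_sqrt Pk Qk hPk0 hQk0 n x]
      have hPp : Ppre Pk n x = ∏ i, Pk i x (x i) := by
        rw [Ppre]
        refine Finset.prod_congr ?_ fun i _ => rfl
        ext i; simp [i.isLt]
      have hPq : Ppre Qk n x = ∏ i, Qk i x (x i) := by
        rw [Ppre]
        refine Finset.prod_congr ?_ fun i _ => rfl
        ext i; simp [i.isLt]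
      rw [hPp, hPq, Real.sqrt_mul (hp0 x)]
    have hpt : ∀ x : (j : Fin n) → X j,
        (Real.sqrt (∏ i, Pk i x (x i)) - Real.sqrt (∏ i, Qk i x (x i))) ^ 2
          = (∏ i, Pk i x (x i)) + (∏ i, Qk i x (x i)) - 2 * MidA Pk Qk 0 n x := by
      intro x
      rw [hMid x, sub_sq, Real.sq_sqrt (hp0 x), Real.sq_sqrt (hq0 x)]
      ring
    rw [Finset.sum_congr rfl fun x _ => hpt x]
    rw [Finset.sum_sub_distrib, Finset.sum_add_distrib, hSp, hSq, ← Finset.mul_sum]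
    ring
  have hS0 : 0 ≤ ∑ x : (j : Fin n) → X j,
        (Real.sqrt (∏ i, Pk i x (x i)) - Real.sqrt (∏ i, Qk i x (x i))) ^ 2 :=
    Finset.sum_nonneg fun x _ => sq_nonneg _
  have hD0 : 0 ≤ ∑ x : (j : Fin n) → X j, (∏ i, Pk i x (x i)) *
      ∑ i, ∑ a, (Real.sqrt (Pk i x a) - Real.sqrt (Qk i x a)) ^ 2 :=
    Finset.sum_nonneg fun x _ => mul_nonneg (hp0 x)
      (Finset.sum_nonneg fun i _ => Finset.sum_nonneg fun a _ => sq_nonneg _)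
  -- telescoping to per-step terms
  have hST : ∑ x : (j : Fin n) → X j,
        (Real.sqrt (∏ i, Pk i x (x i)) - Real.sqrt (∏ i, Qk i x (x i))) ^ 2
      = ∑ k ∈ Finset.range n, ∑ x : (j : Fin n) → X j,
          ((1 : ℝ) * MidA Pk Qk 0 k x * dd Pk Qk k x) * Psuf Pk k x := by
    have hTLk : ∀ k, k < n → 2 * ((∑ x : (j : Fin n) → X j,
          (1 : ℝ) * MidA Pk Qk 0 k x * Psuf Pk k x)
        - ∑ x : (j : Fin n) → X j, (1 : ℝ) * MidA Pk Qk 0 (k + 1) x * Psuf Pk (k + 1) x)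
        = ∑ x : (j : Fin n) → X j, ((1 : ℝ) * MidA Pk Qk 0 k x * dd Pk Qk k x) * Psuf Pk k x :=
      fun k hk => TL Pk Qk hPk0 hQk0 hPk1 hQk1 hPdep hQdep hne (Nat.zero_le k) hk
        (fun _ => (1 : ℝ)) (fun x y _ => rfl)
    have hB0 : (∑ x : (j : Fin n) → X j, (1 : ℝ) * MidA Pk Qk 0 0 x * Psuf Pk 0 x) = 1 := by
      rw [Finset.sum_congr rfl fun x _ => by
        rw [MidA_same Pk Qk 0 x, one_mul, one_mul]]
      exact hPsuf1
    have hBn : (∑ x : (j : Fin n) → X j, (1 : ℝ) * MidA Pk Qk 0 n x * Psuf Pk n x)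
        = ∑ x : (j : Fin n) → X j, MidA Pk Qk 0 n x := by
      refine Finset.sum_congr rfl fun x _ => ?_
      rw [Psuf_top Pk (le_refl n) x, one_mul, mul_one]
    have htel : ∑ k ∈ Finset.range n, ((∑ x : (j : Fin n) → X j,
          (1 : ℝ) * MidA Pk Qk 0 k x * Psuf Pk k x)
        - ∑ x : (j : Fin n) → X j, (1 : ℝ) * MidA Pk Qk 0 (k + 1) x * Psuf Pk (k + 1) x)
        = 1 - ∑ x : (j : Fin n) → X j, MidA Pk Qk 0 n x := by
      rw [Finset.sum_range_sub' (fun k => ∑ x : (j : Fin n) → X j,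
        (1 : ℝ) * MidA Pk Qk 0 k x * Psuf Pk k x) n, hB0, hBn]
    calc ∑ x : (j : Fin n) → X j,
          (Real.sqrt (∏ i, Pk i x (x i)) - Real.sqrt (∏ i, Qk i x (x i))) ^ 2
        = 2 - 2 * ∑ x : (j : Fin n) → X j, MidA Pk Qk 0 n x := hS2
      _ = 2 * (1 - ∑ x : (j : Fin n) → X j, MidA Pk Qk 0 n x) := by ring
      _ = 2 * ∑ k ∈ Finset.range n, ((∑ x : (j : Fin n) → X j,
            (1 : ℝ) * MidA Pk Qk 0 k x * Psuf Pk k x)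
          - ∑ x : (j : Fin n) → X j, (1 : ℝ) * MidA Pk Qk 0 (k + 1) x * Psuf Pk (k + 1) x) := by
          rw [htel]
      _ = ∑ k ∈ Finset.range n, 2 * ((∑ x : (j : Fin n) → X j,
            (1 : ℝ) * MidA Pk Qk 0 k x * Psuf Pk k x)
          - ∑ x : (j : Fin n) → X j, (1 : ℝ) * MidA Pk Qk 0 (k + 1) x * Psuf Pk (k + 1) x) := by
          rw [Finset.mul_sum]
      _ = _ := Finset.sum_congr rfl fun k hk => hTLk k (Finset.mem_range.mp hk)
  -- split good/bad
  have hsplit : ∀ k, (∑ x : (j : Fin n) → X j,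
        ((1 : ℝ) * MidA Pk Qk 0 k x * dd Pk Qk k x) * Psuf Pk k x)
      = (∑ x : (j : Fin n) → X j, ind (¬ stopped Pk Qk k x)
            (((1 : ℝ) * MidA Pk Qk 0 k x * dd Pk Qk k x) * Psuf Pk k x))
        + (∑ x : (j : Fin n) → X j, ind (stopped Pk Qk k x)
            (((1 : ℝ) * MidA Pk Qk 0 k x * dd Pk Qk k x) * Psuf Pk k x)) := by
    intro k
    rw [← Finset.sum_add_distrib]
    refine Finset.sum_congr rfl fun x _ => ?_
    by_cases hst : stopped Pk Qk k x
    · rw [ind_pos hst, ind_neg (fun hc => hc hst)]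
      ring
    · rw [ind_neg hst, ind_pos hst]
      ring
  -- good part
  have hgood : ∀ k, (∑ x : (j : Fin n) → X j, ind (¬ stopped Pk Qk k x)
        (((1 : ℝ) * MidA Pk Qk 0 k x * dd Pk Qk k x) * Psuf Pk k x))
      ≤ 16 * ∑ x : (j : Fin n) → X j, (∏ i, Pk i x (x i)) * dd Pk Qk k x := by
    intro k
    refine le_trans (Finset.sum_le_sum (fun x _ => ?_))
      (le_of_eq (Finset.mul_sum _ _ _).symm)
    refine ind_le (mul_nonneg (by norm_num)
      (mul_nonneg (hp0 x) (dd_nonneg Pk Qk k x))) fun hns => ?_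
    have hnb : ¬ Bad Pk Qk k x := fun hb => hns ⟨k, le_refl k, hb⟩
    have hlt : Ppre Qk k x < 256 * Ppre Pk k x := not_le.mp hnb
    have hPP0 : 0 ≤ Ppre Pk k x := Ppre_nonneg Pk hPk0 k x
    have hM : MidA Pk Qk 0 k x ≤ 16 * Ppre Pk k x := by
      rw [MidA_zero_sqrt Pk Qk hPk0 hQk0 k x]
      have h1 : Ppre Pk k x * Ppre Qk k x ≤ Ppre Pk k x * (256 * Ppre Pk k x) :=
        mul_le_mul_of_nonneg_left (le_of_lt hlt) hPP0
      calc Real.sqrt (Ppre Pk k x * Ppre Qk k x)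
          ≤ Real.sqrt (Ppre Pk k x * (256 * Ppre Pk k x)) := Real.sqrt_le_sqrt h1
        _ = 16 * Ppre Pk k x := by
            rw [show Ppre Pk k x * (256 * Ppre Pk k x) = (16 * Ppre Pk k x) ^ 2 by ring,
              Real.sqrt_sq (mul_nonneg (by norm_num) hPP0)]
    have hdp : 0 ≤ dd Pk Qk k x * Psuf Pk k x :=
      mul_nonneg (dd_nonneg Pk Qk k x) (Psuf_nonneg Pk hPk0 k x)
    calc ((1 : ℝ) * MidA Pk Qk 0 k x * dd Pk Qk k x) * Psuf Pk k x
        = MidA Pk Qk 0 k x * (dd Pk Qk k x * Psuf Pk k x) := by ring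
      _ ≤ (16 * Ppre Pk k x) * (dd Pk Qk k x * Psuf Pk k x) :=
          mul_le_mul_of_nonneg_right hM hdp
      _ = 16 * ((Ppre Pk k x * Psuf Pk k x) * dd Pk Qk k x) := by ring
      _ = 16 * ((∏ i, Pk i x (x i)) * dd Pk Qk k x) := by
          rw [Ppre_mul_Psuf Pk k x]
  have hgoodsum : ∑ k ∈ Finset.range n,
        (16 * ∑ x : (j : Fin n) → X j, (∏ i, Pk i x (x i)) * dd Pk Qk k x)
      = 16 * ∑ x : (j : Fin n) → X j, (∏ i, Pk i x (x i)) *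
          ∑ i, ∑ a, (Real.sqrt (Pk i x a) - Real.sqrt (Qk i x a)) ^ 2 := by
    have hdd_sum : ∀ x : (j : Fin n) → X j, ∑ k ∈ Finset.range n, dd Pk Qk k x
        = ∑ i, ∑ a, (Real.sqrt (Pk i x a) - Real.sqrt (Qk i x a)) ^ 2 := by
      intro x
      rw [← Fin.sum_univ_eq_sum_range (fun k => dd Pk Qk k x) n]
      refine Finset.sum_congr rfl fun i _ => ?_
      simp only [dd, i.isLt, dif_pos, Fin.eta]
    calc ∑ k ∈ Finset.range n,
          (16 * ∑ x : (j : Fin n) → X j, (∏ i, Pk i x (x i)) * dd Pk Qk k x)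
        = 16 * ∑ k ∈ Finset.range n,
            ∑ x : (j : Fin n) → X j, (∏ i, Pk i x (x i)) * dd Pk Qk k x := by
          rw [← Finset.mul_sum]
      _ = 16 * ∑ x : (j : Fin n) → X j,
            ∑ k ∈ Finset.range n, (∏ i, Pk i x (x i)) * dd Pk Qk k x := by
          rw [Finset.sum_comm]
      _ = 16 * ∑ x : (j : Fin n) → X j, (∏ i, Pk i x (x i)) *
            ∑ k ∈ Finset.range n, dd Pk Qk k x := by
          rw [Finset.sum_congr rfl fun x _ => (Finset.mul_sum _ _ _).symm]
      _ = _ := by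
          rw [Finset.sum_congr rfl fun x _ => by rw [hdd_sum x]]
  -- bad part: rearrange by first hitting time
  have hbad1 : ∑ k ∈ Finset.range n, (∑ x : (j : Fin n) → X j, ind (stopped Pk Qk k x)
        (((1 : ℝ) * MidA Pk Qk 0 k x * dd Pk Qk k x) * Psuf Pk k x))
      = ∑ m ∈ Finset.range n, ∑ k ∈ Finset.Ico m n, ∑ x : (j : Fin n) → X j,
          ind (firstB Pk Qk m x)
            (((1 : ℝ) * MidA Pk Qk 0 k x * dd Pk Qk k x) * Psuf Pk k x) := by
    calc ∑ k ∈ Finset.range n, (∑ x : (j : Fin n) → X j, ind (stopped Pk Qk k x)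
          (((1 : ℝ) * MidA Pk Qk 0 k x * dd Pk Qk k x) * Psuf Pk k x))
        = ∑ k ∈ Finset.range n, ∑ x : (j : Fin n) → X j, ∑ m ∈ Finset.range (k + 1),
            ind (firstB Pk Qk m x)
              (((1 : ℝ) * MidA Pk Qk 0 k x * dd Pk Qk k x) * Psuf Pk k x) := by
          refine Finset.sum_congr rfl fun k _ => Finset.sum_congr rfl fun x _ => ?_
          exact (partition_first Pk Qk k x _).symm
      _ = ∑ k ∈ Finset.range n, ∑ m ∈ Finset.range (k + 1), ∑ x : (j : Fin n) → X j,
            ind (firstB Pk Qk m x)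
              (((1 : ℝ) * MidA Pk Qk 0 k x * dd Pk Qk k x) * Psuf Pk k x) := by
          exact Finset.sum_congr rfl fun k _ => Finset.sum_comm
      _ = _ := swap_tri n (fun m k => ∑ x : (j : Fin n) → X j,
            ind (firstB Pk Qk m x)
              (((1 : ℝ) * MidA Pk Qk 0 k x * dd Pk Qk k x) * Psuf Pk k x))
  have hbad2 : ∀ m, m < n → ∑ k ∈ Finset.Ico m n, ∑ x : (j : Fin n) → X j,
          ind (firstB Pk Qk m x)
            (((1 : ℝ) * MidA Pk Qk 0 k x * dd Pk Qk k x) * Psuf Pk k x)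
      ≤ 2 * ∑ x : (j : Fin n) → X j,
          ind (firstB Pk Qk m x) (MidA Pk Qk 0 m x) * Psuf Pk m x := by
    intro m hm
    have hgI : Dep m (fun x => ind (firstB Pk Qk m x) (MidA Pk Qk 0 m x)) := by
      intro x y hxy
      exact ind_congr (firstB_iff Pk Qk hPdep hQdep m x y hxy)
        (MidA_dep Pk Qk hPdep hQdep 0 m x y hxy)
    have hTL2 : ∀ k, m ≤ k → k < n →
        2 * ((∑ x : (j : Fin n) → X j,
            ind (firstB Pk Qk m x) (MidA Pk Qk 0 m x) * MidA Pk Qk m k x * Psuf Pk k x)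
          - ∑ x : (j : Fin n) → X j,
            ind (firstB Pk Qk m x) (MidA Pk Qk 0 m x) * MidA Pk Qk m (k + 1) x
              * Psuf Pk (k + 1) x)
        = ∑ x : (j : Fin n) → X j,
            (ind (firstB Pk Qk m x) (MidA Pk Qk 0 m x) * MidA Pk Qk m k x * dd Pk Qk k x)
              * Psuf Pk k x :=
      fun k h1 h2 => TL Pk Qk hPk0 hQk0 hPk1 hQk1 hPdep hQdep hne h1 h2 _ hgI
    have hid : ∀ k, m ≤ k → ∀ x : (j : Fin n) → X j,
        ind (firstB Pk Qk m x) (((1 : ℝ) * MidA Pk Qk 0 k x * dd Pk Qk k x) * Psuf Pk k x)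
          = (ind (firstB Pk Qk m x) (MidA Pk Qk 0 m x) * MidA Pk Qk m k x * dd Pk Qk k x)
              * Psuf Pk k x := by
      intro k hk x
      by_cases hf : firstB Pk Qk m x
      · rw [ind_pos hf, ind_pos hf, MidA_split Pk Qk hk x]
        ring
      · rw [ind_neg hf, ind_neg hf]
        ring
    have hfn : 0 ≤ ∑ x : (j : Fin n) → X j,
        ind (firstB Pk Qk m x) (MidA Pk Qk 0 m x) * MidA Pk Qk m n x * Psuf Pk n x :=
      Finset.sum_nonneg fun x _ => mul_nonneg (mul_nonneg
        (ind_nonneg (MidA_nonneg Pk Qk 0 m x)) (MidA_nonneg Pk Qk m n x))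
        (Psuf_nonneg Pk hPk0 n x)
    have hmm : (∑ x : (j : Fin n) → X j,
          ind (firstB Pk Qk m x) (MidA Pk Qk 0 m x) * MidA Pk Qk m m x * Psuf Pk m x)
        = ∑ x : (j : Fin n) → X j,
          ind (firstB Pk Qk m x) (MidA Pk Qk 0 m x) * Psuf Pk m x := by
      refine Finset.sum_congr rfl fun x _ => ?_
      rw [MidA_same Pk Qk m x, mul_one]
    calc ∑ k ∈ Finset.Ico m n, ∑ x : (j : Fin n) → X j,
          ind (firstB Pk Qk m x)
            (((1 : ℝ) * MidA Pk Qk 0 k x * dd Pk Qk k x) * Psuf Pk k x)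
        = ∑ k ∈ Finset.Ico m n, 2 * ((∑ x : (j : Fin n) → X j,
            ind (firstB Pk Qk m x) (MidA Pk Qk 0 m x) * MidA Pk Qk m k x * Psuf Pk k x)
          - ∑ x : (j : Fin n) → X j,
            ind (firstB Pk Qk m x) (MidA Pk Qk 0 m x) * MidA Pk Qk m (k + 1) x
              * Psuf Pk (k + 1) x) := by
          refine Finset.sum_congr rfl fun k hk => ?_
          obtain ⟨h1, h2⟩ := Finset.mem_Ico.mp hk
          rw [Finset.sum_congr rfl fun x _ => hid k h1 x]
          exact (hTL2 k h1 h2).symm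
      _ = 2 * ∑ k ∈ Finset.Ico m n, ((∑ x : (j : Fin n) → X j,
            ind (firstB Pk Qk m x) (MidA Pk Qk 0 m x) * MidA Pk Qk m k x * Psuf Pk k x)
          - ∑ x : (j : Fin n) → X j,
            ind (firstB Pk Qk m x) (MidA Pk Qk 0 m x) * MidA Pk Qk m (k + 1) x
              * Psuf Pk (k + 1) x) := by
          rw [Finset.mul_sum]
      _ = 2 * ((∑ x : (j : Fin n) → X j,
            ind (firstB Pk Qk m x) (MidA Pk Qk 0 m x) * MidA Pk Qk m m x * Psuf Pk m x)
          - ∑ x : (j : Fin n) → X j,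
            ind (firstB Pk Qk m x) (MidA Pk Qk 0 m x) * MidA Pk Qk m n x * Psuf Pk n x) := by
          rw [tele (fun k => ∑ x : (j : Fin n) → X j,
            ind (firstB Pk Qk m x) (MidA Pk Qk 0 m x) * MidA Pk Qk m k x * Psuf Pk k x)
            (le_of_lt hm)]
      _ ≤ 2 * ∑ x : (j : Fin n) → X j,
            ind (firstB Pk Qk m x) (MidA Pk Qk 0 m x) * MidA Pk Qk m m x * Psuf Pk m x := by
          linarith
      _ = _ := by rw [hmm]
  have hCSm : ∀ m, ∑ x : (j : Fin n) → X j,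
        ind (firstB Pk Qk m x) (MidA Pk Qk 0 m x) * Psuf Pk m x
      ≤ Real.sqrt (∑ x : (j : Fin n) → X j,
            ind (firstB Pk Qk m x) (Ppre Pk m x * Psuf Pk m x))
        * Real.sqrt (∑ x : (j : Fin n) → X j,
            ind (firstB Pk Qk m x) (Ppre Qk m x * Psuf Pk m x)) := by
    intro m
    have hpt : ∀ x : (j : Fin n) → X j,
        ind (firstB Pk Qk m x) (MidA Pk Qk 0 m x) * Psuf Pk m x
          = Real.sqrt (ind (firstB Pk Qk m x) (Ppre Pk m x * Psuf Pk m x))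
            * Real.sqrt (ind (firstB Pk Qk m x) (Ppre Qk m x * Psuf Pk m x)) := by
      intro x
      by_cases hf : firstB Pk Qk m x
      · rw [ind_pos hf, ind_pos hf, ind_pos hf]
        have hP0 : 0 ≤ Ppre Pk m x := Ppre_nonneg Pk hPk0 m x
        have hQ0 : 0 ≤ Ppre Qk m x := Ppre_nonneg Qk hQk0 m x
        have hS0' : 0 ≤ Psuf Pk m x := Psuf_nonneg Pk hPk0 m x
        rw [MidA_zero_sqrt Pk Qk hPk0 hQk0 m x]
        rw [← Real.sqrt_mul (mul_nonneg hP0 hS0')]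
        rw [show Ppre Pk m x * Psuf Pk m x * (Ppre Qk m x * Psuf Pk m x)
            = (Ppre Pk m x * Ppre Qk m x) * (Psuf Pk m x * Psuf Pk m x) by ring]
        rw [Real.sqrt_mul (mul_nonneg hP0 hQ0), Real.sqrt_mul_self hS0']
      · rw [ind_neg hf, ind_neg hf, ind_neg hf]
        simp
    rw [Finset.sum_congr rfl fun x _ => hpt x]
    exact cs_sqrt Finset.univ _ _
      (fun x _ => ind_nonneg (mul_nonneg (Ppre_nonneg Pk hPk0 m x) (Psuf_nonneg Pk hPk0 m x)))
      (fun x _ => ind_nonneg (mul_nonneg (Ppre_nonneg Qk hQk0 m x) (Psuf_nonneg Pk hPk0 m x)))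
  have hA1 : ∀ m, (∑ x : (j : Fin n) → X j, ind (firstB Pk Qk m x) (Ppre Pk m x * Psuf Pk m x))
      = ∑ x : (j : Fin n) → X j, ind (firstB Pk Qk m x) (∏ i, Pk i x (x i)) := by
    intro m
    exact Finset.sum_congr rfl fun x _ => ind_congr Iff.rfl (Ppre_mul_Psuf Pk m x)
  have hB1 : ∀ m, (∑ x : (j : Fin n) → X j, ind (firstB Pk Qk m x) (Ppre Qk m x * Psuf Pk m x))
      = ∑ x : (j : Fin n) → X j, ind (firstB Pk Qk m x) (∏ i, Qk i x (x i)) := by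
    intro m
    have hdepg : Dep m (fun x => ind (firstB Pk Qk m x) (Ppre Qk m x)) := by
      intro x y hxy
      exact ind_congr (firstB_iff Pk Qk hPdep hQdep m x y hxy)
        (Ppre_dep Qk hQdep m x y hxy)
    have h1 : (∑ x : (j : Fin n) → X j,
          ind (firstB Pk Qk m x) (Ppre Qk m x) * Psuf Pk m x) * CC X m
        = ∑ x : (j : Fin n) → X j, ind (firstB Pk Qk m x) (Ppre Qk m x) :=
      masterU Pk hPk1 hPdep n m (by omega) _ hdepg
    have h2 : (∑ x : (j : Fin n) → X j,
          ind (firstB Pk Qk m x) (Ppre Qk m x) * Psuf Qk m x) * CC X m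
        = ∑ x : (j : Fin n) → X j, ind (firstB Pk Qk m x) (Ppre Qk m x) :=
      masterU Qk hQk1 hQdep n m (by omega) _ hdepg
    have hcc : CC X m ≠ 0 := ne_of_gt (CC_pos hne m)
    have heq : (∑ x : (j : Fin n) → X j,
          ind (firstB Pk Qk m x) (Ppre Qk m x) * Psuf Pk m x)
        = ∑ x : (j : Fin n) → X j,
          ind (firstB Pk Qk m x) (Ppre Qk m x) * Psuf Qk m x :=
      mul_right_cancel₀ hcc (h1.trans h2.symm)
    calc ∑ x : (j : Fin n) → X j, ind (firstB Pk Qk m x) (Ppre Qk m x * Psuf Pk m x)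
        = ∑ x : (j : Fin n) → X j, ind (firstB Pk Qk m x) (Ppre Qk m x) * Psuf Pk m x := by
          exact Finset.sum_congr rfl fun x _ => (ind_mul _ _ _).symm
      _ = ∑ x : (j : Fin n) → X j, ind (firstB Pk Qk m x) (Ppre Qk m x) * Psuf Qk m x := heq
      _ = _ := by
          refine Finset.sum_congr rfl fun x _ => ?_
          rw [ind_mul]
          exact ind_congr Iff.rfl (Ppre_mul_Psuf Qk m x)
  have h256 : ∀ m, 256 * (∑ x : (j : Fin n) → X j,
        ind (firstB Pk Qk m x) (Ppre Pk m x * Psuf Pk m x))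
      ≤ ∑ x : (j : Fin n) → X j, ind (firstB Pk Qk m x) (Ppre Qk m x * Psuf Pk m x) := by
    intro m
    rw [Finset.mul_sum]
    refine Finset.sum_le_sum fun x _ => ?_
    by_cases hf : firstB Pk Qk m x
    · rw [ind_pos hf, ind_pos hf]
      have hS0' : 0 ≤ Psuf Pk m x := Psuf_nonneg Pk hPk0 m x
      calc (256 : ℝ) * (Ppre Pk m x * Psuf Pk m x)
          = (256 * Ppre Pk m x) * Psuf Pk m x := by ring
        _ ≤ Ppre Qk m x * Psuf Pk m x := mul_le_mul_of_nonneg_right hf.1 hS0'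
    · rw [ind_neg hf, ind_neg hf]
      simp
  have hPA : ∑ m ∈ Finset.range n, ∑ x : (j : Fin n) → X j,
        ind (firstB Pk Qk m x) (∏ i, Pk i x (x i))
      = ∑ x : (j : Fin n) → X j, ind (stopped Pk Qk (n - 1) x) (∏ i, Pk i x (x i)) := by
    rw [Finset.sum_comm]
    refine Finset.sum_congr rfl fun x _ => ?_
    rw [show Finset.range n = Finset.range ((n - 1) + 1) by congr 1; omega]
    exact partition_first Pk Qk (n - 1) x _
  have hQA : ∑ m ∈ Finset.range n, ∑ x : (j : Fin n) → X j,
        ind (firstB Pk Qk m x) (∏ i, Qk i x (x i))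
      = ∑ x : (j : Fin n) → X j, ind (stopped Pk Qk (n - 1) x) (∏ i, Qk i x (x i)) := by
    rw [Finset.sum_comm]
    refine Finset.sum_congr rfl fun x _ => ?_
    rw [show Finset.range n = Finset.range ((n - 1) + 1) by congr 1; omega]
    exact partition_first Pk Qk (n - 1) x _
  have hPA0 : 0 ≤ ∑ x : (j : Fin n) → X j, ind (stopped Pk Qk (n - 1) x) (∏ i, Pk i x (x i)) :=
    Finset.sum_nonneg fun x _ => ind_nonneg (hp0 x)
  have hQA0 : 0 ≤ ∑ x : (j : Fin n) → X j, ind (stopped Pk Qk (n - 1) x) (∏ i, Qk i x (x i)) :=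
    Finset.sum_nonneg fun x _ => ind_nonneg (hq0 x)
  -- data processing
  have hDP : (Real.sqrt (∑ x : (j : Fin n) → X j,
          ind (stopped Pk Qk (n - 1) x) (∏ i, Pk i x (x i)))
        - Real.sqrt (∑ x : (j : Fin n) → X j,
          ind (stopped Pk Qk (n - 1) x) (∏ i, Qk i x (x i)))) ^ 2
      ≤ ∑ x : (j : Fin n) → X j,
        (Real.sqrt (∏ i, Pk i x (x i)) - Real.sqrt (∏ i, Qk i x (x i))) ^ 2 := by
    refine le_trans (hell_sub Finset.univ
      (fun x => ind (stopped Pk Qk (n - 1) x) (∏ i, Pk i x (x i)))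
      (fun x => ind (stopped Pk Qk (n - 1) x) (∏ i, Qk i x (x i)))
      (fun x _ => ind_nonneg (hp0 x)) (fun x _ => ind_nonneg (hq0 x)))
      (Finset.sum_le_sum fun x _ => ?_)
    by_cases hst : stopped Pk Qk (n - 1) x
    · rw [ind_pos hst, ind_pos hst]
    · rw [ind_neg hst, ind_neg hst]
      simp [Real.sqrt_zero]
      positivity
  -- assemble
  -- assemble everything
  set S : ℝ := ∑ x : (j : Fin n) → X j,
      (Real.sqrt (∏ i, Pk i x (x i)) - Real.sqrt (∏ i, Qk i x (x i))) ^ 2 with hSdef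
  set D : ℝ := ∑ x : (j : Fin n) → X j, (∏ i, Pk i x (x i)) *
      ∑ i, ∑ a, (Real.sqrt (Pk i x a) - Real.sqrt (Qk i x a)) ^ 2 with hDdef
  set PA : ℝ := ∑ x : (j : Fin n) → X j,
      ind (stopped Pk Qk (n - 1) x) (∏ i, Pk i x (x i)) with hPAdef
  set QA : ℝ := ∑ x : (j : Fin n) → X j,
      ind (stopped Pk Qk (n - 1) x) (∏ i, Qk i x (x i)) with hQAdef
  have hbadle : ∑ k ∈ Finset.range n, ∑ x : (j : Fin n) → X j, ind (stopped Pk Qk k x)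
        (((1 : ℝ) * MidA Pk Qk 0 k x * dd Pk Qk k x) * Psuf Pk k x)
      ≤ 2 * (Real.sqrt PA * Real.sqrt QA) := by
    rw [hbad1]
    calc ∑ m ∈ Finset.range n, ∑ k ∈ Finset.Ico m n, ∑ x : (j : Fin n) → X j,
          ind (firstB Pk Qk m x)
            (((1 : ℝ) * MidA Pk Qk 0 k x * dd Pk Qk k x) * Psuf Pk k x)
        ≤ ∑ m ∈ Finset.range n, 2 * ∑ x : (j : Fin n) → X j,
            ind (firstB Pk Qk m x) (MidA Pk Qk 0 m x) * Psuf Pk m x :=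
          Finset.sum_le_sum fun m hm => hbad2 m (Finset.mem_range.mp hm)
      _ ≤ ∑ m ∈ Finset.range n, 2 * (Real.sqrt (∑ x : (j : Fin n) → X j,
            ind (firstB Pk Qk m x) (Ppre Pk m x * Psuf Pk m x))
          * Real.sqrt (∑ x : (j : Fin n) → X j,
            ind (firstB Pk Qk m x) (Ppre Qk m x * Psuf Pk m x))) :=
          Finset.sum_le_sum fun m _ =>
            mul_le_mul_of_nonneg_left (hCSm m) (by norm_num)
      _ = 2 * ∑ m ∈ Finset.range n, (Real.sqrt (∑ x : (j : Fin n) → X j,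
            ind (firstB Pk Qk m x) (Ppre Pk m x * Psuf Pk m x))
          * Real.sqrt (∑ x : (j : Fin n) → X j,
            ind (firstB Pk Qk m x) (Ppre Qk m x * Psuf Pk m x))) := by
          rw [Finset.mul_sum]
      _ ≤ 2 * (Real.sqrt (∑ m ∈ Finset.range n, ∑ x : (j : Fin n) → X j,
            ind (firstB Pk Qk m x) (Ppre Pk m x * Psuf Pk m x))
          * Real.sqrt (∑ m ∈ Finset.range n, ∑ x : (j : Fin n) → X j,
            ind (firstB Pk Qk m x) (Ppre Qk m x * Psuf Pk m x))) := by
          refine mul_le_mul_of_nonneg_left ?_ (by norm_num)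
          refine cs_sqrt (Finset.range n) _ _ ?_ ?_
          · intro m _
            exact Finset.sum_nonneg fun x _ => ind_nonneg
              (mul_nonneg (Ppre_nonneg Pk hPk0 m x) (Psuf_nonneg Pk hPk0 m x))
          · intro m _
            exact Finset.sum_nonneg fun x _ => ind_nonneg
              (mul_nonneg (Ppre_nonneg Qk hQk0 m x) (Psuf_nonneg Pk hPk0 m x))
      _ = 2 * (Real.sqrt PA * Real.sqrt QA) := by
          rw [Finset.sum_congr rfl fun m _ => hA1 m, Finset.sum_congr rfl fun m _ => hB1 m,
            hPA, hQA]
  have h256T : 256 * PA ≤ QA := by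
    rw [← hPA, ← hQA]
    rw [Finset.sum_congr rfl fun m (_ : m ∈ Finset.range n) => (hA1 m).symm,
      Finset.sum_congr rfl fun m (_ : m ∈ Finset.range n) => (hB1 m).symm]
    rw [Finset.mul_sum]
    exact Finset.sum_le_sum fun m _ => h256 m
  have hsqPA : Real.sqrt PA ≤ Real.sqrt QA / 16 := by
    have h1 : PA ≤ QA / 256 := by linarith
    calc Real.sqrt PA ≤ Real.sqrt (QA / 256) := Real.sqrt_le_sqrt h1
      _ = Real.sqrt QA / 16 := by
          rw [show QA / 256 = QA * (1 / 16 : ℝ) ^ 2 by ring, Real.sqrt_mul hQA0,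
            Real.sqrt_sq (by norm_num : (0:ℝ) ≤ 1 / 16)]
          ring
  have hsqQA : Real.sqrt QA ≤ (16 / 15) * Real.sqrt S := by
    have h2 : Real.sqrt QA - Real.sqrt PA ≤ |Real.sqrt PA - Real.sqrt QA| := by
      rw [abs_sub_comm]
      exact le_abs_self _
    have h3 : |Real.sqrt PA - Real.sqrt QA|
        = Real.sqrt ((Real.sqrt PA - Real.sqrt QA) ^ 2) := (Real.sqrt_sq_eq_abs _).symm
    have h4 : Real.sqrt ((Real.sqrt PA - Real.sqrt QA) ^ 2) ≤ Real.sqrt S :=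
      Real.sqrt_le_sqrt hDP
    have h1 : Real.sqrt QA - Real.sqrt PA ≤ Real.sqrt S := by
      rw [h3] at h2
      linarith
    linarith
  have hQAleS : QA ≤ (256 / 225) * S := by
    have h0 : 0 ≤ Real.sqrt QA := Real.sqrt_nonneg _
    have h1 : Real.sqrt QA * Real.sqrt QA ≤ ((16 / 15) * Real.sqrt S) * ((16 / 15) * Real.sqrt S) :=
      mul_self_le_mul_self h0 hsqQA
    have h2 : Real.sqrt QA * Real.sqrt QA = QA := Real.mul_self_sqrt hQA0
    have h3 : Real.sqrt S * Real.sqrt S = S := Real.mul_self_sqrt hS0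
    calc QA = Real.sqrt QA * Real.sqrt QA := h2.symm
      _ ≤ ((16 / 15) * Real.sqrt S) * ((16 / 15) * Real.sqrt S) := h1
      _ = (256 / 225) * (Real.sqrt S * Real.sqrt S) := by ring
      _ = (256 / 225) * S := by rw [h3]
  have hbadS : 2 * (Real.sqrt PA * Real.sqrt QA) ≤ (32 / 225) * S := by
    have h0Q : 0 ≤ Real.sqrt QA := Real.sqrt_nonneg _
    have h1 : Real.sqrt PA * Real.sqrt QA ≤ (Real.sqrt QA / 16) * Real.sqrt QA :=
      mul_le_mul_of_nonneg_right hsqPA h0Q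
    have h2 : Real.sqrt QA * Real.sqrt QA = QA := Real.mul_self_sqrt hQA0
    calc 2 * (Real.sqrt PA * Real.sqrt QA)
        ≤ 2 * ((Real.sqrt QA / 16) * Real.sqrt QA) :=
          mul_le_mul_of_nonneg_left h1 (by norm_num)
      _ = (Real.sqrt QA * Real.sqrt QA) / 8 := by ring
      _ = QA / 8 := by rw [h2]
      _ ≤ ((256 / 225) * S) / 8 := by linarith
      _ = (32 / 225) * S := by ring
  have hmain : S ≤ 16 * D + (32 / 225) * S := by
    calc S = ∑ k ∈ Finset.range n, ∑ x : (j : Fin n) → X j,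
          ((1 : ℝ) * MidA Pk Qk 0 k x * dd Pk Qk k x) * Psuf Pk k x := hST
      _ = (∑ k ∈ Finset.range n, ∑ x : (j : Fin n) → X j, ind (¬ stopped Pk Qk k x)
            (((1 : ℝ) * MidA Pk Qk 0 k x * dd Pk Qk k x) * Psuf Pk k x))
          + ∑ k ∈ Finset.range n, ∑ x : (j : Fin n) → X j, ind (stopped Pk Qk k x)
            (((1 : ℝ) * MidA Pk Qk 0 k x * dd Pk Qk k x) * Psuf Pk k x) := by
          rw [Finset.sum_congr rfl fun k (_ : k ∈ Finset.range n) => hsplit k,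
            Finset.sum_add_distrib]
      _ ≤ 16 * D + (32 / 225) * S := by
          refine add_le_add ?_ (le_trans hbadle hbadS)
          refine le_trans (Finset.sum_le_sum fun k (_ : k ∈ Finset.range n) => hgood k) ?_
          exact le_of_eq hgoodsum
  have hfin : S ≤ (3600 / 193) * D := by linarith
  have hlog : (0.6931471803 : ℝ) ≤ Real.log n := by
    refine le_trans (le_of_lt Real.log_two_gt_d9) ?_
    exact Real.log_le_log (by norm_num) (by exact_mod_cast hn)
  calc S ≤ (3600 / 193) * D := hfin
    _ ≤ (100 * Real.log n) * D := by
        refine mul_le_mul_of_nonneg_right ?_ hD0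
        linarith
    _ = 100 * Real.log n * D := rfl
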